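/- Fix ρ₀ > 0, l > 0 and a positive integer n, and set L = n·l. For the one-dimensional charge density ρ(x) = ρ₀ sin(2π x / l), define for a ∈ [0, l] the total end charges q₊(a) = ∫_{L−l+a}^{L} ρ(x) dx + p(a) and q₋(a) = ∫_{−L}^{−L+a} ρ(x) dx − p(a), where p(a) = (1/l) ∫_a^{a+l} x ρ(x) dx. Then for every a ∈ [0, l], the dipole moment of the two end charges reproduces the exact total dipole moment of the bar: L·q₊(a) + (−L)·q₋(a) = ∫_{−L}^{L} x ρ(x) dx. -/

import Mathlib

open Real intervalIntegral

lemma int_sin_aux (c : ℝ) (hc : c ≠ 0) (a b : ℝ) :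
    (∫ x in a..b, Real.sin (c * x)) = (Real.cos (c * a) - Real.cos (c * b)) / c := by
  have h : ∀ x ∈ Set.uIcc a b, HasDerivAt (fun x => -Real.cos (c * x) / c)
      (Real.sin (c * x)) x := by
    intro x _
    have h1 : HasDerivAt (fun x => c * x) c x := by
      simpa using (hasDerivAt_id x).const_mul c
    have h2 := (Real.hasDerivAt_cos (c * x)).comp x h1
    have h3 := ((h2.neg).div_const c)
    refine h3.congr_deriv ?_
    field_simp
  rw [intervalIntegral.integral_eq_sub_of_hasDerivAt h
    (Continuous.intervalIntegrable (by continuity) a b)]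
  ring

lemma int_xsin_aux (c : ℝ) (hc : c ≠ 0) (a b : ℝ) :
    (∫ x in a..b, x * Real.sin (c * x)) =
      (Real.sin (c * b) / c ^ 2 - b * Real.cos (c * b) / c)
        - (Real.sin (c * a) / c ^ 2 - a * Real.cos (c * a) / c) := by
  have h : ∀ x ∈ Set.uIcc a b, HasDerivAt
      (fun x => Real.sin (c * x) / c ^ 2 - x * Real.cos (c * x) / c)
      (x * Real.sin (c * x)) x := by
    intro x _
    have h1 : HasDerivAt (fun x => c * x) c x := by
      simpa using (hasDerivAt_id x).const_mul c
    have hs := ((Real.hasDerivAt_sin (c * x)).comp x h1).div_const (c ^ 2)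
    have hc' := (Real.hasDerivAt_cos (c * x)).comp x h1
    have hx : HasDerivAt (fun x : ℝ => x) 1 x := hasDerivAt_id x
    have hm := (hx.mul hc').div_const c
    have h3 := hs.sub hm
    refine h3.congr_deriv ?_
    field_simp
    simp only [Function.comp]
    ring
  rw [intervalIntegral.integral_eq_sub_of_hasDerivAt h
    (Continuous.intervalIntegrable (by continuity) a b)]

/-- The dipole moment of the two total end charges reproduces the exact total
dipole moment of the bar, for every choice `a` of unit cell. -/
theorem end_charges_reproduce_total_dipole_moment
    (ρ₀ l : ℝ) (hρ₀ : 0 < ρ₀) (hl : 0 < l) (n : ℕ) (hn : 0 < n)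
    (L : ℝ) (hL : L = n * l) :
    ∀ a ∈ Set.Icc (0 : ℝ) l,
      L * ((∫ x in (L - l + a)..L, ρ₀ * Real.sin (2 * Real.pi * x / l))
            + (1 / l) * (∫ x in a..(a + l), x * (ρ₀ * Real.sin (2 * Real.pi * x / l))))
        + (-L) * ((∫ x in (-L)..(-L + a), ρ₀ * Real.sin (2 * Real.pi * x / l))
            - (1 / l) * (∫ x in a..(a + l), x * (ρ₀ * Real.sin (2 * Real.pi * x / l))))
        = ∫ x in (-L)..L, x * (ρ₀ * Real.sin (2 * Real.pi * x / l)) := by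
  intro a _
  set c : ℝ := 2 * Real.pi / l with hc
  have hc0 : c ≠ 0 := by
    have := Real.pi_pos
    positivity
  have hrw : ∀ x : ℝ, 2 * Real.pi * x / l = c * x := by
    intro x; rw [hc]; ring
  simp only [hrw]
  have hcl : c * l = 2 * Real.pi := by
    rw [hc]; field_simp
  have hcL : c * L = n * (2 * Real.pi) := by
    rw [hL, ← mul_assoc, mul_comm c (n:ℝ), mul_assoc, hcl]
  -- pull out constant ρ₀
  have e1 : ∀ u v : ℝ, (∫ x in u..v, ρ₀ * Real.sin (c * x))
      = ρ₀ * ((Real.cos (c * u) - Real.cos (c * v)) / c) := by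
    intro u v
    rw [intervalIntegral.integral_const_mul, int_sin_aux c hc0]
  have e2 : ∀ u v : ℝ, (∫ x in u..v, x * (ρ₀ * Real.sin (c * x)))
      = ρ₀ * (((Real.sin (c * v) / c ^ 2 - v * Real.cos (c * v) / c)
        - (Real.sin (c * u) / c ^ 2 - u * Real.cos (c * u) / c))) := by
    intro u v
    have : ∀ x : ℝ, x * (ρ₀ * Real.sin (c * x)) = ρ₀ * (x * Real.sin (c * x)) := by
      intro x; ring
    simp only [this]
    rw [intervalIntegral.integral_const_mul, int_xsin_aux c hc0]
  rw [e1, e1, e2, e2]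
  -- periodic reductions
  have cos1 : Real.cos (c * (L - l + a)) = Real.cos (c * a) := by
    have : c * (L - l + a) = c * a + ((((n:ℤ) - 1) : ℤ) : ℝ) * (2 * Real.pi) := by
      push_cast; rw [mul_add, mul_sub, hcL, hcl]; ring
    rw [this, Real.cos_add_int_mul_two_pi]
  have cos2 : Real.cos (c * L) = 1 := by
    rw [hcL]
    have : (n:ℝ) * (2 * Real.pi) = 0 + (((n:ℤ)) : ℝ) * (2 * Real.pi) := by push_cast; ring
    rw [this, Real.cos_add_int_mul_two_pi, Real.cos_zero]
  have cos3 : Real.cos (c * (-L)) = 1 := by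
    have : c * (-L) = 0 + (((-(n:ℤ)) : ℤ) : ℝ) * (2 * Real.pi) := by
      push_cast; rw [mul_neg, hcL]; ring
    rw [this, Real.cos_add_int_mul_two_pi, Real.cos_zero]
  have cos4 : Real.cos (c * (-L + a)) = Real.cos (c * a) := by
    have : c * (-L + a) = c * a + (((-(n:ℤ)) : ℤ) : ℝ) * (2 * Real.pi) := by
      push_cast; rw [mul_add, mul_neg, hcL]; ring
    rw [this, Real.cos_add_int_mul_two_pi]
  have cos5 : Real.cos (c * (a + l)) = Real.cos (c * a) := by
    have : c * (a + l) = c * a + (((1:ℤ)) : ℝ) * (2 * Real.pi) := by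
      push_cast; rw [mul_add, hcl]; ring
    rw [this, Real.cos_add_int_mul_two_pi]
  have sin1 : Real.sin (c * L) = 0 := by
    rw [hcL]
    have : (n:ℝ) * (2 * Real.pi) = 0 + (((n:ℤ)) : ℝ) * (2 * Real.pi) := by push_cast; ring
    rw [this, Real.sin_add_int_mul_two_pi, Real.sin_zero]
  have sin2 : Real.sin (c * (-L)) = 0 := by
    have : c * (-L) = 0 + (((-(n:ℤ)) : ℤ) : ℝ) * (2 * Real.pi) := by
      push_cast; rw [mul_neg, hcL]; ring
    rw [this, Real.sin_add_int_mul_two_pi, Real.sin_zero]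
  have sin5 : Real.sin (c * (a + l)) = Real.sin (c * a) := by
    have : c * (a + l) = c * a + (((1:ℤ)) : ℝ) * (2 * Real.pi) := by
      push_cast; rw [mul_add, hcl]; ring
    rw [this, Real.sin_add_int_mul_two_pi]
  rw [cos1, cos2, cos3, cos4, cos5, sin1, sin2, sin5]
  have hl0 : l ≠ 0 := ne_of_gt hl
  field_simp
  ring
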